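/- For δ ∈ {1,-1} and real constants c1, c2, the function u(t,x) = c1 + 4δ·e^{-x/2} - (t + c2)·e^{-x} satisfies the PDE u_t + (u_x + u_xx)^2 = 0. -/

import Mathlib

theorem stmt3 (δ c1 c2 : ℝ)
    (hδ : δ = 1 ∨ δ = -1)
    (u : ℝ → ℝ → ℝ)
    (hu : ∀ t x : ℝ, u t x = c1 + 4 * δ * Real.exp (-x / 2) - (t + c2) * Real.exp (-x)) :
    ∀ t x : ℝ,
      deriv (fun s => u s x) t
      + (deriv (fun y => u t y) x
         + deriv (fun y => deriv (fun z => u t z) y) x) ^ 2 = 0 := by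
  intro t x
  have hexp : ∀ y : ℝ, HasDerivAt (fun z : ℝ => Real.exp (-z)) (-Real.exp (-y)) y := by
    intro y
    have h := ((hasDerivAt_id y).neg).exp
    simpa using h
  have hexp2 : ∀ y : ℝ, HasDerivAt (fun z : ℝ => Real.exp (-z / 2))
      (-(1/2) * Real.exp (-y / 2)) y := by
    intro y
    have h := (((hasDerivAt_id y).neg).div_const 2).exp
    simp only [Pi.neg_apply, id_eq] at h
    convert h using 1
    ring
  have hut : deriv (fun s => u s x) t = -Real.exp (-x) := by
    have h : HasDerivAt (fun s : ℝ => c1 + 4 * δ * Real.exp (-x / 2) - (s + c2) * Real.exp (-x))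
        (-Real.exp (-x)) t := by
      have h1 : HasDerivAt (fun s : ℝ => (s + c2) * Real.exp (-x)) (Real.exp (-x)) t := by
        simpa using ((hasDerivAt_id t).add_const c2).mul_const (Real.exp (-x))
      simpa [Pi.sub_def] using (hasDerivAt_const t (c1 + 4 * δ * Real.exp (-x / 2))).sub h1
    have := h.deriv
    rw [← this]
    congr 1
    funext s
    rw [hu]
  have hux : ∀ y : ℝ, deriv (fun z => u t z) y
      = -2 * δ * Real.exp (-y / 2) + (t + c2) * Real.exp (-y) := by
    intro y
    have h : HasDerivAt (fun z : ℝ => c1 + 4 * δ * Real.exp (-z / 2) - (t + c2) * Real.exp (-z))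
        (-2 * δ * Real.exp (-y / 2) + (t + c2) * Real.exp (-y)) y := by
      have h1 : HasDerivAt (fun z : ℝ => c1 + 4 * δ * Real.exp (-z / 2))
          (4 * δ * (-(1/2) * Real.exp (-y / 2))) y :=
        ((hexp2 y).const_mul (4 * δ)).const_add c1
      have h2 : HasDerivAt (fun z : ℝ => (t + c2) * Real.exp (-z))
          ((t + c2) * (-Real.exp (-y))) y := (hexp y).const_mul (t + c2)
      have := h1.sub h2
      convert this using 1
      · rfl
      · rfl
      · rfl
      · ring
    have := h.deriv
    rw [← this]
    congr 1
    funext z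
    rw [hu]
  have huxx : deriv (fun y => deriv (fun z => u t z) y) x
      = δ * Real.exp (-x / 2) - (t + c2) * Real.exp (-x) := by
    have heq : (fun y => deriv (fun z => u t z) y)
        = fun y => -2 * δ * Real.exp (-y / 2) + (t + c2) * Real.exp (-y) := by
      funext y; exact hux y
    rw [heq]
    have h : HasDerivAt (fun y : ℝ => -2 * δ * Real.exp (-y / 2) + (t + c2) * Real.exp (-y))
        (δ * Real.exp (-x / 2) - (t + c2) * Real.exp (-x)) x := by
      have h1 := ((hexp2 x).const_mul (-2 * δ)).add ((hexp x).const_mul (t + c2))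
      convert h1 using 1
      · rfl
      · rfl
      · rfl
      · ring
    exact h.deriv
  rw [hut, hux x, huxx]
  have hδ2 : δ ^ 2 = 1 := by rcases hδ with h | h <;> simp [h]
  have hsq : Real.exp (-x / 2) * Real.exp (-x / 2) = Real.exp (-x) := by
    rw [← Real.exp_add]; ring_nf
  nlinarith [hsq, hδ2, Real.exp_pos (-x)]
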